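/- arXiv:1306.3601 — 4 statements merged into one kernel-verified Lean document; each statement's English description precedes it below -/
import Mathlib

section
/- For any 1 < p ≤ 2 and any vectors x, y in ℓ_p (or ℝ^d with the p-norm), (‖x‖_p^p + ‖y‖_p^p)/2 ≤ ‖(x+y)/2‖_p^p + ‖(x-y)/2‖_p^p. -/
noncomputable def pnorm (p : ℝ) {d : ℕ} (x : Fin d → ℝ) : ℝ :=
  (∑ i, |x i| ^ p) ^ (1 / p)

/-- subadditivity of `t ^ r` for `r ≤ 1`, real version. -/
lemma aux_rpow_add_le_add_rpow {r : ℝ} (hr0 : 0 ≤ r) (hr1 : r ≤ 1) {a b : ℝ}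
    (ha : 0 ≤ a) (hb : 0 ≤ b) : (a + b) ^ r ≤ a ^ r + b ^ r := by
  have h := NNReal.rpow_add_le_add_rpow ⟨a, ha⟩ ⟨b, hb⟩ hr0 hr1
  have h' := (NNReal.coe_le_coe).2 h
  push_cast at h'
  exact h'

/-- concavity inequality: `a ^ r + b ^ r ≤ 2 * ((a+b)/2) ^ r` for `0 < r ≤ 1`. -/
lemma aux_concave {r : ℝ} (hr0 : 0 < r) (hr1 : r ≤ 1) {a b : ℝ}
    (ha : 0 ≤ a) (hb : 0 ≤ b) : a ^ r + b ^ r ≤ 2 * ((a + b) / 2) ^ r := by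
  have hq : (1 : ℝ) ≤ 1 / r := by
    rw [le_div_iff₀ hr0]; simpa using hr1
  have key0 := Real.rpow_arith_mean_le_arith_mean_rpow (Finset.univ : Finset (Fin 2))
    ![1/2, 1/2] ![a ^ r, b ^ r]
    (by intro i _; fin_cases i <;> norm_num)
    (by simp [Fin.sum_univ_succ]; norm_num)
    (by intro i _; fin_cases i <;> simp <;> positivity) hq
  have key : (1 / 2 * a ^ r + 1 / 2 * b ^ r) ^ (1 / r) ≤
      1 / 2 * (a ^ r) ^ (1 / r) + 1 / 2 * (b ^ r) ^ (1 / r) := by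
    simpa [Fin.sum_univ_succ] using key0
  have har : (a ^ r) ^ (1 / r) = a := by
    rw [← Real.rpow_mul ha, mul_one_div, div_self hr0.ne', Real.rpow_one]
  have hbr : (b ^ r) ^ (1 / r) = b := by
    rw [← Real.rpow_mul hb, mul_one_div, div_self hr0.ne', Real.rpow_one]
  rw [har, hbr] at key
  -- key : (1/2 * a^r + 1/2 * b^r) ^ (1/r) ≤ 1/2 * a + 1/2 * b
  have hS : 0 ≤ (1:ℝ)/2 * a ^ r + 1/2 * b ^ r := by positivity
  have := Real.rpow_le_rpow (Real.rpow_nonneg hS _) key hr0.le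
  rw [← Real.rpow_mul hS, one_div_mul_cancel hr0.ne', Real.rpow_one] at this
  calc a ^ r + b ^ r = 2 * (1/2 * a ^ r + 1/2 * b ^ r) := by ring
    _ ≤ 2 * (1/2 * a + 1/2 * b) ^ r := by nlinarith
    _ = 2 * ((a + b) / 2) ^ r := by ring_nf

/-- key two-point inequality. -/
lemma aux_key {p : ℝ} (hp1 : 1 < p) (hp2 : p ≤ 2) (u v : ℝ) :
    |u + v| ^ p + |u - v| ^ p ≤ 2 * (|u| ^ p + |v| ^ p) := by
  set r := p / 2 with hr
  have hr0 : 0 < r := by positivity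
  have hr1 : r ≤ 1 := by rw [hr]; linarith
  have habs : ∀ t : ℝ, |t| ^ p = (t ^ 2) ^ r := by
    intro t
    rw [← sq_abs, ← Real.rpow_natCast |t| 2, ← Real.rpow_mul (abs_nonneg t)]
    congr 1
    push_cast [hr]; ring
  rw [habs, habs, habs, habs]
  have h1 := aux_concave hr0 hr1 (sq_nonneg (u + v)) (sq_nonneg (u - v))
  have h2 : ((u + v) ^ 2 + (u - v) ^ 2) / 2 = u ^ 2 + v ^ 2 := by ring
  rw [h2] at h1
  have h3 := aux_rpow_add_le_add_rpow hr0.le hr1 (sq_nonneg u) (sq_nonneg v)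
  nlinarith [Real.rpow_nonneg (sq_nonneg u) r]

/-- p-uniform smoothness of ℓ_p for 1 < p ≤ 2. -/
theorem lp_uniform_smoothness (p : ℝ) (hp1 : 1 < p) (hp2 : p ≤ 2) (d : ℕ)
    (x y : Fin d → ℝ) :
    (pnorm p x ^ p + pnorm p y ^ p) / 2 ≤
      pnorm p ((x + y) / 2) ^ p + pnorm p ((x - y) / 2) ^ p := by
  have hp0 : (0:ℝ) < p := by linarith
  have hpow : ∀ z : Fin d → ℝ, pnorm p z ^ p = ∑ i, |z i| ^ p := by
    intro z
    have hs : (0:ℝ) ≤ ∑ i, |z i| ^ p := by positivity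
    rw [pnorm, ← Real.rpow_mul hs, one_div, inv_mul_cancel₀ hp0.ne', Real.rpow_one]
  rw [hpow, hpow, hpow, hpow]
  have happ : ∀ i, ((x + y) / 2) i = (x i + y i) / 2 := fun i => rfl
  have happ' : ∀ i, ((x - y) / 2) i = (x i - y i) / 2 := fun i => rfl
  simp only [happ, happ']
  rw [← Finset.sum_add_distrib, ← Finset.sum_add_distrib, Finset.sum_div]
  refine Finset.sum_le_sum fun i _ => ?_
  have h := aux_key hp1 hp2 ((x i + y i) / 2) ((x i - y i) / 2)
  have e1 : (x i + y i) / 2 + (x i - y i) / 2 = x i := by ring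
  have e2 : (x i + y i) / 2 - (x i - y i) / 2 = y i := by ring
  rw [e1, e2] at h
  linarith
end

section
/- For any 1 < p ≤ 2 and any vectors x, y in ℝ^d with the p-norm, (‖x‖_p^2 + ‖y‖_p^2)/2 ≥ ‖(x+y)/2‖_p^2 + (p-1)·‖(x-y)/2‖_p^2. -/
open Real Set Finset

lemma aux_g {q : ℝ} (hq0 : 0 < q) (hq1 : q ≤ 1) {t : ℝ} (ht0 : 0 ≤ t) (ht1 : t ≤ 1) :
    2 * q * t ≤ (1 + t) ^ q - (1 - t) ^ q := by
  set G : ℝ → ℝ := fun t => (1 + t) ^ q - (1 - t) ^ q - 2 * q * t with hG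
  have hcont : ContinuousOn G (Icc 0 1) := by
    apply ContinuousOn.sub
    apply ContinuousOn.sub
    · exact ((continuous_const.add continuous_id).rpow_const
        (fun x => Or.inr hq0.le)).continuousOn
    · exact ((continuous_const.sub continuous_id).rpow_const
        (fun x => Or.inr hq0.le)).continuousOn
    · exact (continuous_const.mul continuous_id).continuousOn
  have hderiv : ∀ s ∈ Ioo (0:ℝ) 1, HasDerivAt G
      (1 * q * (1 + s) ^ (q - 1) - -1 * q * (1 - s) ^ (q - 1) - 2 * q) s := by
    intro s hs
    have h1 : (0:ℝ) < 1 + s := by linarith [hs.1]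
    have h2 : (0:ℝ) < 1 - s := by linarith [hs.2]
    have d1 : HasDerivAt (fun t : ℝ => (1 + t) ^ q) (1 * q * (1 + s) ^ (q - 1)) s := by
      simpa using (((hasDerivAt_id s).const_add 1).rpow_const (Or.inl h1.ne'))
    have d2 : HasDerivAt (fun t : ℝ => (1 - t) ^ q) (-1 * q * (1 - s) ^ (q - 1)) s := by
      have h : HasDerivAt (fun t : ℝ => 1 - t) (-1) s := by
        simpa using ((hasDerivAt_id s).const_sub 1)
      simpa using h.rpow_const (Or.inl h2.ne')
    have d3 : HasDerivAt (fun t : ℝ => 2 * q * t) (2 * q) s := by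
      simpa using (hasDerivAt_id s).const_mul (2 * q)
    exact (d1.sub d2).sub d3
  have hmono : MonotoneOn G (Icc 0 1) := by
    apply monotoneOn_of_deriv_nonneg (convex_Icc 0 1) hcont
    · intro s hs
      rw [interior_Icc] at hs
      exact (hderiv s hs).differentiableAt.differentiableWithinAt
    · intro s hs
      rw [interior_Icc] at hs
      rw [(hderiv s hs).deriv]
      have h1 : (0:ℝ) < 1 + s := by linarith [hs.1]
      have h2 : (0:ℝ) < 1 - s := by linarith [hs.2]
      -- need (1+s)^(q-1) + (1-s)^(q-1) ≥ 2
      set u := (1 + s) ^ (q - 1) with hu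
      set v := (1 - s) ^ (q - 1) with hv
      have hu0 : 0 < u := rpow_pos_of_pos h1 _
      have hv0 : 0 < v := rpow_pos_of_pos h2 _
      have huv : 1 ≤ u * v := by
        rw [hu, hv, ← Real.mul_rpow h1.le h2.le]
        have hx : (1 + s) * (1 - s) ≤ 1 := by nlinarith [hs.1, hs.2]
        have hx0 : 0 < (1 + s) * (1 - s) := mul_pos h1 h2
        exact Real.one_le_rpow_of_pos_of_le_one_of_nonpos hx0 hx (by linarith)
      have h2le : 2 ≤ u + v := by nlinarith [sq_nonneg (u - v), sq_nonneg (u + v - 2)]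
      nlinarith [hq0]
  have h0 : G 0 = 0 := by simp [hG]
  have := hmono (Set.mem_Icc.2 ⟨le_refl 0, zero_le_one⟩) (Set.mem_Icc.2 ⟨ht0, ht1⟩) ht0
  rw [h0] at this
  simp only [hG] at this
  linarith

lemma aux_f {p : ℝ} (hp1 : 1 < p) (hp2 : p ≤ 2) {t : ℝ} (ht0 : 0 ≤ t) (ht1 : t ≤ 1) :
    2 + p * (p - 1) * t ^ 2 ≤ (1 + t) ^ p + (1 - t) ^ p := by
  set F : ℝ → ℝ := fun t => (1 + t) ^ p + (1 - t) ^ p - 2 - p * (p - 1) * t ^ 2 with hF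
  have hp0 : (0:ℝ) < p := by linarith
  have hcont : ContinuousOn F (Icc 0 1) := by
    apply ContinuousOn.sub
    apply ContinuousOn.sub
    apply ContinuousOn.add
    · exact ((continuous_const.add continuous_id).rpow_const
        (fun x => Or.inr hp0.le)).continuousOn
    · exact ((continuous_const.sub continuous_id).rpow_const
        (fun x => Or.inr hp0.le)).continuousOn
    · exact continuousOn_const
    · exact (continuous_const.mul (continuous_pow 2)).continuousOn
  have hderiv : ∀ s ∈ Ioo (0:ℝ) 1, HasDerivAt F
      (1 * p * (1 + s) ^ (p - 1) + -1 * p * (1 - s) ^ (p - 1) - p * (p - 1) * (2 * s)) s := by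
    intro s hs
    have h1 : (0:ℝ) < 1 + s := by linarith [hs.1]
    have h2 : (0:ℝ) < 1 - s := by linarith [hs.2]
    have d1 : HasDerivAt (fun t : ℝ => (1 + t) ^ p) (1 * p * (1 + s) ^ (p - 1)) s := by
      simpa using (((hasDerivAt_id s).const_add 1).rpow_const (Or.inl h1.ne'))
    have d2 : HasDerivAt (fun t : ℝ => (1 - t) ^ p) (-1 * p * (1 - s) ^ (p - 1)) s := by
      have h : HasDerivAt (fun t : ℝ => 1 - t) (-1) s := by
        simpa using ((hasDerivAt_id s).const_sub 1)
      simpa using h.rpow_const (Or.inl h2.ne')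
    have d3 : HasDerivAt (fun t : ℝ => p * (p - 1) * t ^ 2) (p * (p - 1) * (2 * s)) s := by
      have := (hasDerivAt_pow 2 s).const_mul (p * (p - 1))
      simpa [mul_comm, mul_assoc] using this
    exact (((d1.add d2).sub (hasDerivAt_const s 2)).sub d3).congr_deriv (by ring)
  have hmono : MonotoneOn F (Icc 0 1) := by
    apply monotoneOn_of_deriv_nonneg (convex_Icc 0 1) hcont
    · intro s hs
      rw [interior_Icc] at hs
      exact (hderiv s hs).differentiableAt.differentiableWithinAt
    · intro s hs
      rw [interior_Icc] at hs
      rw [(hderiv s hs).deriv]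
      have hg := aux_g (q := p - 1) (by linarith) (by linarith) hs.1.le hs.2.le
      nlinarith [hp0]
  have h0 : F 0 = 0 := by simp [hF]; norm_num
  have := hmono (Set.mem_Icc.2 ⟨le_refl 0, zero_le_one⟩) (Set.mem_Icc.2 ⟨ht0, ht1⟩) ht0
  rw [h0] at this
  simp only [hF] at this
  linarith

lemma two_point_aux {p : ℝ} (hp1 : 1 < p) (hp2 : p ≤ 2) {s t : ℝ} (ht : 0 ≤ t) (hts : t ≤ s) :
    s ^ 2 + (p - 1) * t ^ 2 ≤ (((s + t) ^ p + (s - t) ^ p) / 2) ^ (2 / p) := by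
  have hp0 : (0:ℝ) < p := by linarith
  rcases eq_or_lt_of_le (ht.trans hts) with hs0 | hs0
  · have hs : s = 0 := hs0.symm
    have ht0 : t = 0 := le_antisymm (hs ▸ hts) ht
    rw [hs, ht0]
    simp [Real.zero_rpow hp0.ne']
    positivity
  · -- s > 0; set r = t/s
    set r := t / s with hr
    have hr0 : 0 ≤ r := div_nonneg ht hs0.le
    have hr1 : r ≤ 1 := by rw [hr, div_le_one hs0]; exact hts
    have hst : s + t = s * (1 + r) := by rw [hr]; field_simp
    have hst' : s - t = s * (1 - r) := by rw [hr]; field_simp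
    have h1r : (0:ℝ) ≤ 1 + r := by linarith
    have h2r : (0:ℝ) ≤ 1 - r := by linarith
    have key : ((s + t) ^ p + (s - t) ^ p) / 2
        = s ^ p * (((1 + r) ^ p + (1 - r) ^ p) / 2) := by
      rw [hst, hst', Real.mul_rpow hs0.le h1r, Real.mul_rpow hs0.le h2r]
      ring
    have hsum0 : (0:ℝ) ≤ ((1 + r) ^ p + (1 - r) ^ p) / 2 := by positivity
    have hexp : p * (2 / p) = 2 := by field_simp
    have hrhs : (s ^ p * (((1 + r) ^ p + (1 - r) ^ p) / 2)) ^ (2 / p)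
        = s ^ 2 * ((((1 + r) ^ p + (1 - r) ^ p) / 2) ^ (2 / p)) := by
      rw [Real.mul_rpow (by positivity) hsum0, ← Real.rpow_mul hs0.le, hexp, Real.rpow_two]
    rw [key, hrhs]
    have hbern : 1 + (p - 1) * r ^ 2 ≤ (((1 + r) ^ p + (1 - r) ^ p) / 2) ^ (2 / p) := by
      have h1 : 1 + p * (p - 1) * r ^ 2 / 2 ≤ ((1 + r) ^ p + (1 - r) ^ p) / 2 := by
        have := aux_f hp1 hp2 hr0 hr1
        linarith
      have h2 : (1 + p * (p - 1) * r ^ 2 / 2) ^ (2 / p)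
          ≤ (((1 + r) ^ p + (1 - r) ^ p) / 2) ^ (2 / p) := by
        have hpr : (0:ℝ) ≤ p * (p - 1) * r ^ 2 / 2 := div_nonneg (mul_nonneg (mul_nonneg hp0.le (by linarith)) (sq_nonneg r)) (by norm_num)
        apply Real.rpow_le_rpow (by linarith) h1 (by positivity)
      refine le_trans ?_ h2
      have hnn : (0:ℝ) ≤ p * (p - 1) * r ^ 2 / 2 := div_nonneg (mul_nonneg (mul_nonneg hp0.le (by linarith)) (sq_nonneg r)) (by norm_num)
      have hb := one_add_mul_self_le_rpow_one_add
        (s := p * (p - 1) * r ^ 2 / 2) (by linarith)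
        (p := 2 / p) (by rw [le_div_iff₀ hp0]; linarith)
      have heq : 1 + 2 / p * (p * (p - 1) * r ^ 2 / 2) = 1 + (p - 1) * r ^ 2 := by
        field_simp
      rw [heq] at hb
      exact hb
    have hts' : t = s * r := by rw [hr]; field_simp
    calc s ^ 2 + (p - 1) * t ^ 2 = s ^ 2 * (1 + (p - 1) * r ^ 2) := by
          rw [hts']; ring
      _ ≤ s ^ 2 * (((1 + r) ^ p + (1 - r) ^ p) / 2) ^ (2 / p) := by
          apply mul_le_mul_of_nonneg_left hbern (by positivity)

lemma abs_pair {p : ℝ} (s t : ℝ) :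
    |s + t| ^ p + |s - t| ^ p = (|s| + |t|) ^ p + |(|s| - |t|)| ^ p := by
  rcases le_total 0 s with hs | hs <;> rcases le_total 0 t with ht | ht
  · rw [abs_of_nonneg hs, abs_of_nonneg ht, abs_of_nonneg (show (0:ℝ) ≤ s + t by linarith)]
  · rw [abs_of_nonneg hs, abs_of_nonpos ht,
      abs_of_nonneg (show (0:ℝ) ≤ s - t by linarith),
      show s + -t = s - t from by ring, show s - -t = s + t from by ring]
    ring
  · rw [abs_of_nonpos hs, abs_of_nonneg ht, abs_of_nonpos (show s - t ≤ 0 by linarith),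
      show -s + t = -(s - t) from by ring, show -s - t = -(s + t) from by ring, abs_neg]
    try ring
  · rw [abs_of_nonpos hs, abs_of_nonpos ht, abs_of_nonpos (show s + t ≤ 0 by linarith),
      show -s + -t = -(s + t) from by ring, show -s - -t = -(s - t) from by ring, abs_neg]
    try ring

lemma two_point {p : ℝ} (hp1 : 1 < p) (hp2 : p ≤ 2) (s t : ℝ) :
    s ^ 2 + (p - 1) * t ^ 2 ≤ ((|s + t| ^ p + |s - t| ^ p) / 2) ^ (2 / p) := by
  rw [abs_pair]
  rcases le_total |t| |s| with h | h
  · have h2 := two_point_aux hp1 hp2 (abs_nonneg t) h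
    rw [abs_of_nonneg (show (0:ℝ) ≤ |s| - |t| by linarith)]
    calc s ^ 2 + (p - 1) * t ^ 2 = |s| ^ 2 + (p - 1) * |t| ^ 2 := by rw [sq_abs, sq_abs]
      _ ≤ _ := h2
  · have h2 := two_point_aux hp1 hp2 (abs_nonneg s) h
    rw [show |(|s| - |t|)| = |t| - |s| from by
        rw [abs_sub_comm]; exact abs_of_nonneg (by linarith),
      show |s| + |t| = |t| + |s| from add_comm _ _]
    refine le_trans ?_ h2
    have hsq : |s| ^ 2 ≤ |t| ^ 2 := pow_le_pow_left₀ (abs_nonneg s) h 2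
    nlinarith [sq_abs s, sq_abs t]

lemma rminkowski {q : ℝ} (hq0 : 0 < q) (hq1 : q ≤ 1) {d : ℕ} (a b : Fin d → ℝ)
    (ha : ∀ i, 0 ≤ a i) (hb : ∀ i, 0 ≤ b i) :
    (∑ i, a i ^ q) ^ (1 / q) + (∑ i, b i ^ q) ^ (1 / q)
      ≤ (∑ i, (a i + b i) ^ q) ^ (1 / q) := by
  set A := ∑ i, a i ^ q with hA
  set B := ∑ i, b i ^ q with hB
  set S := ∑ i, (a i + b i) ^ q with hS
  have hA0 : 0 ≤ A := Finset.sum_nonneg fun i _ => rpow_nonneg (ha i) q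
  have hB0 : 0 ≤ B := Finset.sum_nonneg fun i _ => rpow_nonneg (hb i) q
  have hS0 : 0 ≤ S := Finset.sum_nonneg fun i _ => rpow_nonneg (add_nonneg (ha i) (hb i)) q
  have hAS : A ≤ S := Finset.sum_le_sum fun i _ =>
    rpow_le_rpow (ha i) (le_add_of_nonneg_right (hb i)) hq0.le
  have hBS : B ≤ S := Finset.sum_le_sum fun i _ =>
    rpow_le_rpow (hb i) (le_add_of_nonneg_left (ha i)) hq0.le
  rcases eq_or_lt_of_le hA0 with hA' | hA'
  · rw [← hA', Real.zero_rpow (by positivity), zero_add]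
    exact rpow_le_rpow hB0 hBS (by positivity)
  rcases eq_or_lt_of_le hB0 with hB' | hB'
  · rw [← hB', Real.zero_rpow (by positivity), add_zero]
    exact rpow_le_rpow hA0 hAS (by positivity)
  -- both positive
  set α := A ^ (1/q) with hα
  set β := B ^ (1/q) with hβ
  have hα0 : 0 < α := rpow_pos_of_pos hA' _
  have hβ0 : 0 < β := rpow_pos_of_pos hB' _
  set T := α + β with hT
  have hT0 : 0 < T := by positivity
  have hαq : α ^ q = A := by
    rw [hα, ← Real.rpow_mul hA0, one_div_mul_cancel hq0.ne', Real.rpow_one]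
  have hβq : β ^ q = B := by
    rw [hβ, ← Real.rpow_mul hB0, one_div_mul_cancel hq0.ne', Real.rpow_one]
  set c := α / T with hc
  have hc0 : 0 < c := by positivity
  have hc1 : c < 1 := by rw [hc, div_lt_one hT0]; linarith
  have hc1' : 1 - c = β / T := by rw [hc]; field_simp [hT]; linarith
  -- pointwise concavity estimate
  have hpt : ∀ i, c ^ (1 - q) * a i ^ q + (1 - c) ^ (1 - q) * b i ^ q
      ≤ (a i + b i) ^ q := by
    intro i
    have hconc := (Real.concaveOn_rpow hq0.le hq1).2
      (Set.mem_Ici.2 (div_nonneg (ha i) hc0.le))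
      (div_nonneg (hb i) (by linarith : (0:ℝ) ≤ 1 - c))
      hc0.le (by linarith : (0:ℝ) ≤ 1 - c) (by ring)
    simp only [smul_eq_mul] at hconc
    have h1c : (0:ℝ) < 1 - c := by linarith
    have e1 : c * (a i / c) + (1 - c) * (b i / (1 - c)) = a i + b i := by
      field_simp
    have e2 : c * (a i / c) ^ q = c ^ (1 - q) * a i ^ q := by
      rw [Real.div_rpow (ha i) hc0.le, Real.rpow_sub hc0, Real.rpow_one]
      field_simp [(Real.rpow_pos_of_pos hc0 q).ne']
      try ring
    have e3 : (1 - c) * (b i / (1 - c)) ^ q = (1 - c) ^ (1 - q) * b i ^ q := by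
      rw [Real.div_rpow (hb i) h1c.le, Real.rpow_sub h1c, Real.rpow_one]
      field_simp [(Real.rpow_pos_of_pos h1c q).ne']
      try ring
    rw [e1, e2, e3] at hconc
    exact hconc
  have hsum : c ^ (1 - q) * A + (1 - c) ^ (1 - q) * B ≤ S := by
    rw [hA, hB, Finset.mul_sum, Finset.mul_sum, hS, ← Finset.sum_add_distrib]
    exact Finset.sum_le_sum fun i _ => hpt i
  have hTq : (0:ℝ) < T ^ q := rpow_pos_of_pos hT0 q
  have e4 : c ^ (1 - q) * A = α * T ^ (q - 1) := by
    rw [hc, Real.div_rpow hα0.le hT0.le, ← hαq, div_mul_eq_mul_div,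
      ← Real.rpow_add hα0, sub_add_cancel, Real.rpow_one,
      Real.rpow_sub hT0, Real.rpow_sub hT0, Real.rpow_one]
    field_simp
  have e5 : (1 - c) ^ (1 - q) * B = β * T ^ (q - 1) := by
    rw [hc1', Real.div_rpow hβ0.le hT0.le, ← hβq, div_mul_eq_mul_div,
      ← Real.rpow_add hβ0, sub_add_cancel, Real.rpow_one,
      Real.rpow_sub hT0, Real.rpow_sub hT0, Real.rpow_one]
    field_simp
  have hkey : T ^ q ≤ S := by
    have e6 : T ^ q = α * T ^ (q - 1) + β * T ^ (q - 1) := by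
      rw [← add_mul, ← hT]
      nth_rewrite 2 [← Real.rpow_one T]
      rw [← Real.rpow_add hT0]
      norm_num
    rw [e6, ← e4, ← e5]
    exact hsum
  calc T = (T ^ q) ^ (1/q) := by
        rw [← Real.rpow_mul hT0.le, mul_one_div_cancel hq0.ne', Real.rpow_one]
    _ ≤ S ^ (1/q) := rpow_le_rpow (by positivity) hkey (by positivity)


lemma sq_rpow_half {p : ℝ} (hp0 : 0 < p) (w : ℝ) : (w ^ 2) ^ (p / 2) = |w| ^ p := by
  rw [← sq_abs, ← Real.rpow_natCast |w| 2, ← Real.rpow_mul (abs_nonneg _),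
    show ((2:ℕ):ℝ) * (p / 2) = p by push_cast; ring]

lemma pnorm_sq {p : ℝ} (hp0 : 0 < p) {d : ℕ} (z : Fin d → ℝ) :
    pnorm p z ^ 2 = (∑ i, (z i ^ 2) ^ (p / 2)) ^ (2 / p) := by
  have hX0 : (0:ℝ) ≤ ∑ i, |z i| ^ p :=
    Finset.sum_nonneg fun i _ => Real.rpow_nonneg (abs_nonneg _) p
  rw [pnorm, ← Real.rpow_natCast ((∑ i, |z i| ^ p) ^ (1/p)) 2,
    ← Real.rpow_mul hX0, show (1/p) * ((2:ℕ):ℝ) = 2/p by push_cast; ring]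
  congr 1
  exact Finset.sum_congr rfl fun i _ => (sq_rpow_half hp0 (z i)).symm

/-- 2-uniform convexity of ℓ_p with sharp constant p - 1, for 1 < p ≤ 2. -/
theorem lp_uniform_convexity (p : ℝ) (hp1 : 1 < p) (hp2 : p ≤ 2) (d : ℕ)
    (x y : Fin d → ℝ) :
    pnorm p ((x + y) / 2) ^ 2 + (p - 1) * pnorm p ((x - y) / 2) ^ 2 ≤
      (pnorm p x ^ 2 + pnorm p y ^ 2) / 2 := by
  have hp0 : (0:ℝ) < p := by linarith
  have hq0 : (0:ℝ) < p / 2 := by linarith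
  have hq1 : p / 2 ≤ 1 := by linarith
  set a : Fin d → ℝ := fun i => (((x + y) / 2) i) ^ 2 with ha
  set b : Fin d → ℝ := fun i => (p - 1) * ((((x - y) / 2) i) ^ 2) with hb
  have ha0 : ∀ i, 0 ≤ a i := fun i => sq_nonneg _
  have hb0 : ∀ i, 0 ≤ b i := fun i => mul_nonneg (by linarith) (sq_nonneg _)
  set X := ∑ i, |x i| ^ p with hX
  set Y := ∑ i, |y i| ^ p with hY
  have hX0 : 0 ≤ X := Finset.sum_nonneg fun i _ => Real.rpow_nonneg (abs_nonneg _) p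
  have hY0 : 0 ≤ Y := Finset.sum_nonneg fun i _ => Real.rpow_nonneg (abs_nonneg _) p
  have hqe : 1 / (p/2) = 2 / p := one_div_div p 2
  -- step 1: rewrite first pnorm
  have h1 : pnorm p ((x + y) / 2) ^ 2 = (∑ i, a i ^ (p/2)) ^ (2/p) :=
    pnorm_sq hp0 ((x + y) / 2)
  -- step 2: second term
  have h2 : (p - 1) * pnorm p ((x - y) / 2) ^ 2 = (∑ i, b i ^ (p/2)) ^ (2/p) := by
    rw [pnorm_sq hp0 ((x - y) / 2)]
    have e1 : ∀ i, b i ^ (p/2) = (p - 1) ^ (p/2) * ((((x - y)/2) i) ^ 2) ^ (p/2) := by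
      intro i
      rw [hb]
      exact Real.mul_rpow (by linarith) (sq_nonneg _)
    rw [Finset.sum_congr rfl fun i _ => e1 i, ← Finset.mul_sum,
      Real.mul_rpow (Real.rpow_nonneg (by linarith) _)
        (Finset.sum_nonneg fun i _ => Real.rpow_nonneg (sq_nonneg _) _),
      ← Real.rpow_mul (by linarith : (0:ℝ) ≤ p - 1),
      show (p/2) * (2/p) = 1 by field_simp, Real.rpow_one]
  rw [h1, h2]
  -- step 3: reverse Minkowski
  have h3 := rminkowski hq0 hq1 a b ha0 hb0
  rw [hqe] at h3
  -- step 4: pointwise two-point bound, then sum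
  have h4 : ∑ i, (a i + b i) ^ (p/2) ≤ (X + Y) / 2 := by
    have e2 : (X + Y) / 2 = ∑ i, (|x i| ^ p + |y i| ^ p) / 2 := by
      rw [hX, hY, ← Finset.sum_add_distrib, ← Finset.sum_div]
    rw [e2]
    apply Finset.sum_le_sum
    intro i _
    have hs : (((x + y) / 2) i) = (x i + y i) / 2 := by
      simp [Pi.add_apply, Pi.div_apply]
    have ht : (((x - y) / 2) i) = (x i - y i) / 2 := by
      simp [Pi.sub_apply, Pi.div_apply]
    have htp := two_point hp1 hp2 ((x i + y i)/2) ((x i - y i)/2)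
    rw [show (x i + y i)/2 + (x i - y i)/2 = x i by ring,
      show (x i + y i)/2 - (x i - y i)/2 = y i by ring] at htp
    have hab : a i + b i ≤ ((|x i| ^ p + |y i| ^ p) / 2) ^ (2/p) := by
      rw [ha, hb]
      simp only [hs, ht]
      exact htp
    calc (a i + b i) ^ (p/2) ≤ (((|x i| ^ p + |y i| ^ p) / 2) ^ (2/p)) ^ (p/2) :=
          Real.rpow_le_rpow (add_nonneg (ha0 i) (hb0 i)) hab hq0.le
      _ = (|x i| ^ p + |y i| ^ p) / 2 := by
          rw [← Real.rpow_mul (by positivity), show (2/p) * (p/2) = 1 by field_simp,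
            Real.rpow_one]
  have h5 : (∑ i, (a i + b i) ^ (p/2)) ^ (2/p) ≤ ((X + Y) / 2) ^ (2/p) :=
    Real.rpow_le_rpow (Finset.sum_nonneg fun i _ =>
      Real.rpow_nonneg (add_nonneg (ha0 i) (hb0 i)) _) h4 (by positivity)
  -- step 6: power mean
  have h6 : ((X + Y) / 2) ^ (2/p) ≤ (X ^ (2/p) + Y ^ (2/p)) / 2 := by
    have hcx := (convexOn_rpow (show (1:ℝ) ≤ 2/p by
      rw [le_div_iff₀ hp0]; linarith)).2
      (Set.mem_Ici.2 hX0) (Set.mem_Ici.2 hY0)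
      (by norm_num : (0:ℝ) ≤ 1/2) (by norm_num : (0:ℝ) ≤ 1/2) (by norm_num)
    simp only [smul_eq_mul] at hcx
    calc ((X + Y) / 2) ^ (2/p) = (1/2 * X + 1/2 * Y) ^ (2/p) := by ring_nf
      _ ≤ 1/2 * X ^ (2/p) + 1/2 * Y ^ (2/p) := hcx
      _ = (X ^ (2/p) + Y ^ (2/p)) / 2 := by ring
  -- step 7: convert back
  have h7 : pnorm p x ^ 2 = X ^ (2/p) := by
    rw [pnorm_sq hp0 x]
    congr 1
    exact Finset.sum_congr rfl fun i _ => sq_rpow_half hp0 (x i)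
  have h8 : pnorm p y ^ 2 = Y ^ (2/p) := by
    rw [pnorm_sq hp0 y]
    congr 1
    exact Finset.sum_congr rfl fun i _ => sq_rpow_half hp0 (y i)
  rw [h7, h8]
  calc (∑ i, a i ^ (p/2)) ^ (2/p) + (∑ i, b i ^ (p/2)) ^ (2/p)
      ≤ (∑ i, (a i + b i) ^ (p/2)) ^ (2/p) := h3
    _ ≤ ((X + Y) / 2) ^ (2/p) := h5
    _ ≤ (X ^ (2/p) + Y ^ (2/p)) / 2 := h6
end

section
/- Let Z_1, ..., Z_t be i.i.d. nonnegative bounded random variables and let T ≤ t·E[Z_1]/2 (more generally T ≤ ∑_i E[Z_i] - s for s = ∑_i E[Z_i] - T ≥ 0). Then P(∑_{i=1}^t Z_i < T) ≤ exp(-(∑_i E[Z_i] - T)^2 / (2 ∑_i E[Z_i^2])). -/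
open MeasureTheory ProbabilityTheory

lemma exp_neg_le_quadratic {x : ℝ} (hx : 0 ≤ x) :
    Real.exp (-x) ≤ 1 - x + x ^ 2 / 2 := by
  set f : ℝ → ℝ := fun y => 1 - y + y ^ 2 / 2 - Real.exp (-y) with hf
  have hder : ∀ y : ℝ, HasDerivAt f (-1 + y + Real.exp (-y)) y := by
    intro y
    have h1 : HasDerivAt (fun y : ℝ => Real.exp (-y)) (-Real.exp (-y)) y := by
      have h := (Real.hasDerivAt_exp (-y)).comp y (hasDerivAt_neg y)
      simp only [mul_neg, mul_one] at h
      exact h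
    have h2 : HasDerivAt (fun y : ℝ => 1 - y + y ^ 2 / 2) (-1 + y) y := by
      have h3 := ((hasDerivAt_const y (1:ℝ)).sub (hasDerivAt_id y)).add
        ((hasDerivAt_pow 2 y).div_const 2)
      exact h3.congr_deriv (by norm_num)
    have := h2.sub h1
    exact this.congr_deriv (by ring)
  have hmono : MonotoneOn f (Set.Ici (0:ℝ)) := by
    apply monotoneOn_of_deriv_nonneg (convex_Ici 0)
    · exact (Continuous.continuousOn (by fun_prop))
    · intro y hy
      exact (hder y).differentiableAt.differentiableWithinAt
    · intro y hy
      rw [(hder y).deriv]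
      have h4 := Real.add_one_le_exp (-y)
      linarith
  have h0 : f 0 = 0 := by simp [hf]
  have := hmono (Set.self_mem_Ici) hx hx
  rw [h0] at this
  simp only [hf] at this
  linarith

/-- Maurer's inequality: for independent nonnegative random variables with finite
second moments, `P(∑ X_i ≤ ∑ E[X_i] - s) ≤ exp(-s²/(2 ∑ E[X_i²]))`. -/
theorem maurer_inequality {Ω : Type*} [MeasurableSpace Ω] (μ : Measure Ω)
    [IsProbabilityMeasure μ] (t : ℕ) (X : Fin t → Ω → ℝ)
    (hmeas : ∀ i, Measurable (X i))
    (hpos : ∀ i ω, 0 ≤ X i ω)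
    (hint : ∀ i, Integrable (fun ω => (X i ω) ^ 2) μ)
    (hindep : iIndepFun X μ)
    (s : ℝ) (hs : 0 ≤ s) :
    μ {ω | ∑ i, X i ω ≤ (∑ i, ∫ ω, X i ω ∂μ) - s} ≤
      ENNReal.ofReal (Real.exp (-(s ^ 2) / (2 * ∑ i, ∫ ω, (X i ω) ^ 2 ∂μ))) := by
  set V : ℝ := ∑ i, ∫ ω, (X i ω) ^ 2 ∂μ with hV
  set m : ℝ := ∑ i, ∫ ω, X i ω ∂μ with hm
  have hVnn : 0 ≤ V := Finset.sum_nonneg fun i _ =>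
    integral_nonneg fun ω => sq_nonneg _
  -- trivial cases
  by_cases hsV : s = 0 ∨ V = 0
  · have : -(s ^ 2) / (2 * V) = 0 ∨ (-(s^2)/(2*V) = -(s^2)/(2*V)) := by
      rcases hsV with h | h <;> simp [h]
    rcases hsV with h | h
    · rw [h]; simp
      calc μ _ ≤ 1 := prob_le_one
        _ = ENNReal.ofReal (Real.exp 0) := by simp
        _ = _ := by norm_num
    · rw [h]
      calc μ _ ≤ 1 := prob_le_one
        _ = _ := by norm_num
  push_neg at hsV
  obtain ⟨hs0, hV0⟩ := hsV
  have hspos : 0 < s := lt_of_le_of_ne hs (Ne.symm hs0)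
  have hVpos : 0 < V := lt_of_le_of_ne hVnn (Ne.symm hV0)
  set l : ℝ := s / V with hl
  have hlpos : 0 < l := div_pos hspos hVpos
  -- integrability of X i
  have hintX : ∀ i, Integrable (X i) μ := by
    intro i
    refine Integrable.mono ((integrable_const 1).add (hint i)) (hmeas i).aestronglyMeasurable ?_
    filter_upwards with ω
    rw [Real.norm_eq_abs, abs_of_nonneg (hpos i ω)]
    rcases le_total (X i ω) 1 with h | h
    · have := sq_nonneg (X i ω)
      simp only [Pi.add_apply]
      rw [Real.norm_eq_abs]
      rw [abs_of_nonneg (by positivity)]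
      linarith
    · have : X i ω ≤ X i ω ^ 2 := by nlinarith
      simp only [Pi.add_apply]
      rw [Real.norm_eq_abs, abs_of_nonneg (by positivity)]
      linarith
  -- integrability of exp(-l * X i)
  have hintexp : ∀ i, Integrable (fun ω => Real.exp (-l * X i ω)) μ := by
    intro i
    refine Integrable.mono' (integrable_const 1)
      (((hmeas i).const_mul (-l)).exp.aestronglyMeasurable) ?_
    filter_upwards with ω
    rw [Real.norm_eq_abs, abs_of_pos (Real.exp_pos _), Real.exp_le_one_iff]
    have := hpos i ω
    nlinarith
  -- mgf bound for each i
  have hmgf : ∀ i, mgf (X i) μ (-l) ≤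
      Real.exp (-l * (∫ ω, X i ω ∂μ) + l^2 * (∫ ω, (X i ω)^2 ∂μ) / 2) := by
    intro i
    have hb : ∀ ω, Real.exp (-l * X i ω) ≤ 1 - l * X i ω + l^2 * (X i ω)^2 / 2 := by
      intro ω
      have h := exp_neg_le_quadratic (mul_nonneg hlpos.le (hpos i ω))
      have he : (l * X i ω)^2/2 = l^2 * (X i ω)^2 / 2 := by ring
      rw [neg_mul]
      linarith
    have e1 : Integrable (fun ω => 1 - l * X i ω) μ := by
      exact (integrable_const 1).sub ((hintX i).const_mul l)
    have e2 : Integrable (fun ω => l^2 * (X i ω)^2 / 2) μ := by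
      exact ((hint i).const_mul (l^2)).div_const 2
    have h1 : mgf (X i) μ (-l) ≤ ∫ ω, (1 - l * X i ω + l^2 * (X i ω)^2 / 2) ∂μ := by
      refine integral_mono (hintexp i) (e1.add e2) hb
    have h2 : ∫ ω, (1 - l * X i ω + l^2 * (X i ω)^2 / 2) ∂μ =
        1 - l * (∫ ω, X i ω ∂μ) + l^2 * (∫ ω, (X i ω)^2 ∂μ) / 2 := by
      rw [integral_add e1 e2, integral_sub (integrable_const 1) ((hintX i).const_mul l)]
      simp [integral_const, integral_const_mul, integral_div]
    have h3 := Real.add_one_le_exp (-l * (∫ ω, X i ω ∂μ) + l^2 * (∫ ω, (X i ω)^2 ∂μ) / 2)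
    rw [h2] at h1
    calc mgf (X i) μ (-l) ≤ _ := h1
      _ ≤ _ := by linarith
  -- Chernoff
  have hintsum : Integrable (fun ω => Real.exp (-l * (∑ i, X i ω))) μ := by
    refine Integrable.mono' (integrable_const 1)
      (((Finset.measurable_sum Finset.univ fun i _ => hmeas i).const_mul (-l)).exp.aestronglyMeasurable) ?_
    filter_upwards with ω
    rw [Real.norm_eq_abs, abs_of_pos (Real.exp_pos _), Real.exp_le_one_iff]
    have : 0 ≤ ∑ i, X i ω := Finset.sum_nonneg fun i _ => hpos i ω
    nlinarith
  have hchern := measure_le_le_exp_mul_mgf (μ := μ) (X := fun ω => ∑ i, X i ω)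
    (m - s) (neg_nonpos_of_nonneg hlpos.le) hintsum
  have hsum_eq : (fun ω => ∑ i, X i ω) = ∑ i, X i := by ext ω; simp
  have hmgfsum : mgf (fun ω => ∑ i, X i ω) μ (-l) = ∏ i, mgf (X i) μ (-l) := by
    rw [hsum_eq]; exact hindep.mgf_sum hmeas Finset.univ
  have hprod : ∏ i, mgf (X i) μ (-l) ≤
      ∏ i, Real.exp (-l * (∫ ω, X i ω ∂μ) + l^2 * (∫ ω, (X i ω)^2 ∂μ) / 2) := by
    refine Finset.prod_le_prod (fun i _ => mgf_nonneg) fun i _ => hmgf i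
  have hprodexp : ∏ i, Real.exp (-l * (∫ ω, X i ω ∂μ) + l^2 * (∫ ω, (X i ω)^2 ∂μ) / 2)
      = Real.exp (-l * m + l^2 * V / 2) := by
    rw [← Real.exp_sum]
    congr 1
    rw [hm, hV, Finset.sum_add_distrib]
    congr 1
    · rw [← Finset.mul_sum]
    · rw [← Finset.sum_div, ← Finset.mul_sum]
  have key : (μ {ω | ∑ i, X i ω ≤ m - s}).toReal ≤ Real.exp (-(s^2) / (2 * V)) := by
    calc (μ {ω | ∑ i, X i ω ≤ m - s}).toReal
        ≤ Real.exp (-(-l) * (m - s)) * mgf (fun ω => ∑ i, X i ω) μ (-l) := hchern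
      _ ≤ Real.exp (l * (m - s)) * Real.exp (-l * m + l^2 * V / 2) := by
          rw [neg_neg]
          refine mul_le_mul_of_nonneg_left ?_ (Real.exp_pos _).le
          rw [hmgfsum]
          exact hprod.trans_eq hprodexp
      _ = Real.exp (l * (m - s) + (-l * m + l^2 * V / 2)) := (Real.exp_add _ _).symm
      _ = Real.exp (-(s^2) / (2 * V)) := by
          congr 1
          rw [hl]
          field_simp
          ring
  rw [ENNReal.le_ofReal_iff_toReal_le (measure_ne_top μ _) (Real.exp_pos _).le]
  exact key
end

section
/- Let Y be a nonnegative random variable whose density φ(x) on [1,∞) satisfies a/x^{p+1} - b/x^3 ≤ φ(x) ≤ 2^{(p+1)/2}a/x^{p+1} + b/x^3 for constants a, b > 0 and 1 < p < 2. Define Z_M = min(Y, M) for M > 1. Then a·ln M - C ≤ E[Z_M^p] ≤ 2^{(p+1)/2}a·ln M + C for some constant C independent of M; in particular E[Z_M^p] = Θ(ln M) as M → ∞. -/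
open MeasureTheory Set

/-- Truncated p-th moment bound: `E[min(Y,M)^p] = Θ(ln M)`. -/
theorem truncated_pth_moment (p a b : ℝ) (hp1 : 1 < p) (hp2 : p < 2)
    (ha : 0 < a) (hb : 0 < b)
    (μ : Measure ℝ) [IsProbabilityMeasure μ] (hsupp : μ (Set.Iio 0) = 0)
    (φ : ℝ → ℝ) (hφm : Measurable φ) (hφ0 : ∀ x, 0 ≤ φ x)
    (hdens : ∀ s : Set ℝ, MeasurableSet s → s ⊆ Set.Ici 1 →
      μ s = ENNReal.ofReal (∫ x in s, φ x))
    (hlb : ∀ x ≥ (1 : ℝ), a / x ^ (p + 1) - b / x ^ 3 ≤ φ x)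
    (hub : ∀ x ≥ (1 : ℝ), φ x ≤ 2 ^ ((p + 1) / 2) * a / x ^ (p + 1) + b / x ^ 3) :
    ∃ C : ℝ, ∀ M > (1 : ℝ),
      a * Real.log M - C ≤ ∫ x, (min x M) ^ p ∂μ ∧
      ∫ x, (min x M) ^ p ∂μ ≤ 2 ^ ((p + 1) / 2) * a * Real.log M + C := by
  have hp0 : (0:ℝ) < p := by linarith
  have h2p : (0:ℝ) < 2 - p := by linarith
  set c : ℝ := 2 ^ ((p + 1) / 2) with hcdef
  have hc0 : (0:ℝ) < c := Real.rpow_pos_of_pos two_pos _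
  -- rewriting of the density bounds in rpow form
  have hxpow : ∀ x : ℝ, 1 ≤ x → ∀ t : ℝ, (0:ℝ) < x ^ t := fun x hx t =>
    Real.rpow_pos_of_pos (by linarith) t
  have hdiv1 : ∀ d : ℝ, ∀ x : ℝ, 1 ≤ x → d / x ^ (p + 1) = d * x ^ (-(p + 1)) := by
    intro d x hx
    rw [Real.rpow_neg (by linarith : (0:ℝ) ≤ x), div_eq_mul_inv]
  have hdiv3 : ∀ d : ℝ, ∀ x : ℝ, 1 ≤ x → d / x ^ (3:ℕ) = d * x ^ (-(3:ℝ)) := by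
    intro d x hx
    rw [Real.rpow_neg (by linarith : (0:ℝ) ≤ x), div_eq_mul_inv]
    norm_num
  -- integrability of the basic power functions on `Ici 1`
  have hint1 : IntegrableOn (fun x : ℝ => x ^ (-(p+1))) (Ici (1:ℝ)) := by
    rw [integrableOn_Ici_iff_integrableOn_Ioi]
    exact integrableOn_Ioi_rpow_of_lt (by linarith) one_pos
  have hint3 : IntegrableOn (fun x : ℝ => x ^ (-(3:ℝ))) (Ici (1:ℝ)) := by
    rw [integrableOn_Ici_iff_integrableOn_Ioi]
    exact integrableOn_Ioi_rpow_of_lt (by norm_num) one_pos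
  have hintp3 : IntegrableOn (fun x : ℝ => x ^ (p - 3)) (Ici (1:ℝ)) := by
    rw [integrableOn_Ici_iff_integrableOn_Ioi]
    exact integrableOn_Ioi_rpow_of_lt (by linarith) one_pos
  -- φ is integrable on Ici 1
  have hφub : ∀ x : ℝ, 1 ≤ x → φ x ≤ c * a * x ^ (-(p+1)) + b * x ^ (-(3:ℝ)) := by
    intro x hx
    have := hub x hx
    rwa [hdiv1 (c * a) x hx, hdiv3 b x hx] at this
  have hBint : IntegrableOn (fun x : ℝ => c * a * x ^ (-(p+1)) + b * x ^ (-(3:ℝ)))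
      (Ici (1:ℝ)) := (hint1.const_mul (c * a)).add (hint3.const_mul b)
  have hφint : IntegrableOn φ (Ici (1:ℝ)) := by
    refine Integrable.mono' hBint hφm.aestronglyMeasurable ?_
    filter_upwards [ae_restrict_mem measurableSet_Ici] with x hx
    rw [Real.norm_eq_abs, abs_of_nonneg (hφ0 x)]
    exact hφub x hx
  -- μ restricted to Ici 1 is the measure with density φ
  have hrestr : μ.restrict (Ici 1) =
      (volume.restrict (Ici 1)).withDensity (fun x => ENNReal.ofReal (φ x)) := by
    ext s hs
    rw [Measure.restrict_apply hs, withDensity_apply _ hs,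
      Measure.restrict_restrict hs,
      hdens _ (hs.inter measurableSet_Ici) inter_subset_right,
      ofReal_integral_eq_lintegral_ofReal
        (hφint.mono_set inter_subset_right)
        (Filter.Eventually.of_forall fun x => hφ0 x)]
  refine ⟨c * a * (1 / p) + b * (1 / (2 - p)) + 1, fun M hM => ?_⟩
  have hM0 : (0:ℝ) < M := by linarith
  set f : ℝ → ℝ := fun x => (min x M) ^ p with hfdef
  have hfmeas : Measurable f := by fun_prop
  -- pointwise facts about f
  have hf0 : ∀ x : ℝ, 0 ≤ x → 0 ≤ f x := by
    intro x hx
    exact Real.rpow_nonneg (le_min hx hM0.le) p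
  have hfle : ∀ x : ℝ, 1 ≤ x → f x ≤ x ^ p := fun x hx =>
    Real.rpow_le_rpow (le_min (by linarith) hM0.le) (min_le_left _ _) hp0.le
  have hfleM : ∀ x : ℝ, 1 ≤ x → f x ≤ M ^ p := fun x hx =>
    Real.rpow_le_rpow (le_min (by linarith) hM0.le) (min_le_right _ _) hp0.le
  have hfeq1 : ∀ x ∈ Ioc (1:ℝ) M, f x = x ^ p := by
    intro x hx; simp only [hfdef, min_eq_left hx.2]
  have hfeq2 : ∀ x ∈ Ioi M, f x = M ^ p := by
    intro x hx; simp only [hfdef, min_eq_right (le_of_lt (mem_Ioi.mp hx))]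
  -- the two auxiliary integrands
  set g1 : ℝ → ℝ := fun x => f x * x ^ (-(p+1)) with hg1def
  set g3 : ℝ → ℝ := fun x => f x * x ^ (-(3:ℝ)) with hg3def
  have hg1int : IntegrableOn g1 (Ici (1:ℝ)) := by
    refine Integrable.mono' (hint1.const_mul (M ^ p))
      (hfmeas.mul (by fun_prop : Measurable fun x : ℝ => x ^ (-(p+1)))).aestronglyMeasurable ?_
    filter_upwards [ae_restrict_mem measurableSet_Ici] with x hx
    have hx1 : (1:ℝ) ≤ x := hx
    rw [Real.norm_eq_abs, abs_of_nonneg (mul_nonneg (hf0 x (by linarith)) (hxpow x hx1 _).le)]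
    exact mul_le_mul_of_nonneg_right (hfleM x hx1) (hxpow x hx1 _).le
  have hg3int : IntegrableOn g3 (Ici (1:ℝ)) := by
    refine Integrable.mono' hintp3
      (hfmeas.mul (by fun_prop : Measurable fun x : ℝ => x ^ (-(3:ℝ)))).aestronglyMeasurable ?_
    filter_upwards [ae_restrict_mem measurableSet_Ici] with x hx
    have hx1 : (1:ℝ) ≤ x := hx
    rw [Real.norm_eq_abs, abs_of_nonneg (mul_nonneg (hf0 x (by linarith)) (hxpow x hx1 _).le)]
    calc f x * x ^ (-(3:ℝ)) ≤ x ^ p * x ^ (-(3:ℝ)) :=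
          mul_le_mul_of_nonneg_right (hfle x hx1) (hxpow x hx1 _).le
      _ = x ^ (p - 3) := by
          rw [← Real.rpow_add (by linarith : (0:ℝ) < x)]; ring_nf
  -- computing the integrals of g1
  have hIg1a : ∫ x in Ioc (1:ℝ) M, g1 x = Real.log M := by
    rw [setIntegral_congr_fun measurableSet_Ioc (g := fun x => x⁻¹) ?_]
    · rw [← intervalIntegral.integral_of_le hM.le, integral_inv (by
        rw [Set.uIcc_of_le hM.le]; rintro ⟨h1, h2⟩; linarith)]
      simp
    · intro x hx
      rw [hg1def]
      simp only
      rw [hfeq1 x hx, ← Real.rpow_add (by linarith [hx.1] : (0:ℝ) < x)]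
      rw [show p + -(p+1) = -1 by ring, Real.rpow_neg_one]
  have hIg1b : ∫ x in Ioi M, g1 x = 1 / p := by
    rw [setIntegral_congr_fun measurableSet_Ioi
      (g := fun x => M ^ p * x ^ (-(p+1))) ?_]
    · rw [integral_const_mul, integral_Ioi_rpow_of_lt (by linarith) hM0,
        show -(p+1) + 1 = -p by ring, Real.rpow_neg hM0.le]
      have hMp : (0:ℝ) < M ^ p := Real.rpow_pos_of_pos hM0 p
      field_simp
    · intro x hx
      rw [hg1def]; simp only; rw [hfeq2 x hx]
  have hg1val : ∫ x in Ici (1:ℝ), g1 x = Real.log M + 1 / p := by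
    rw [integral_Ici_eq_integral_Ioi, ← Ioc_union_Ioi_eq_Ioi hM.le,
      setIntegral_union (Ioc_disjoint_Ioi le_rfl) measurableSet_Ioi
        (hg1int.mono_set (fun x hx => le_of_lt hx.1))
        (hg1int.mono_set (fun x hx => le_of_lt (lt_trans hM hx))),
      hIg1a, hIg1b]
  have hIg3 : ∫ x in Ici (1:ℝ), g3 x ≤ 1 / (2 - p) := by
    calc ∫ x in Ici (1:ℝ), g3 x ≤ ∫ x in Ici (1:ℝ), x ^ (p - 3) := by
          refine setIntegral_mono_on hg3int hintp3 measurableSet_Ici ?_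
          intro x hx
          have hx1 : (1:ℝ) ≤ x := hx
          calc g3 x ≤ x ^ p * x ^ (-(3:ℝ)) :=
                mul_le_mul_of_nonneg_right (hfle x hx1) (hxpow x hx1 _).le
            _ = x ^ (p - 3) := by
                rw [← Real.rpow_add (by linarith : (0:ℝ) < x)]; ring_nf
      _ = 1 / (2 - p) := by
          rw [integral_Ici_eq_integral_Ioi, integral_Ioi_rpow_of_lt (by linarith) one_pos,
            Real.one_rpow, show p - 3 + 1 = -(2 - p) by ring, div_neg, neg_div, neg_neg]
  have hg3nonneg : 0 ≤ ∫ x in Ici (1:ℝ), g3 x := by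
    refine setIntegral_nonneg measurableSet_Ici ?_
    intro x hx
    exact mul_nonneg (hf0 x (by linarith [mem_Ici.mp hx])) (Real.rpow_nonneg (by linarith [mem_Ici.mp hx]) _)
  -- the μ-integral over Ici 1 equals the Lebesgue integral of f * φ
  have hfφint : IntegrableOn (fun x => f x * φ x) (Ici (1:ℝ)) := by
    refine Integrable.mono' (hBint.const_mul (M ^ p))
      (hfmeas.mul hφm).aestronglyMeasurable ?_
    filter_upwards [ae_restrict_mem measurableSet_Ici] with x hx
    have hx1 : (1:ℝ) ≤ x := hx
    rw [Real.norm_eq_abs, abs_of_nonneg (mul_nonneg (hf0 x (by linarith)) (hφ0 x))]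
    calc f x * φ x ≤ M ^ p * φ x :=
          mul_le_mul_of_nonneg_right (hfleM x hx1) (hφ0 x)
      _ ≤ M ^ p * (c * a * x ^ (-(p+1)) + b * x ^ (-(3:ℝ))) :=
          mul_le_mul_of_nonneg_left (hφub x hx1) (by positivity)
  have hIciint : IntegrableOn f (Ici (1:ℝ)) μ := by
    unfold IntegrableOn
    rw [hrestr, integrable_withDensity_iff hφm.ennreal_ofReal
      (Filter.Eventually.of_forall fun x => ENNReal.ofReal_lt_top)]
    refine hfφint.congr (Filter.Eventually.of_forall fun x => ?_)
    simp [ENNReal.toReal_ofReal (hφ0 x)]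
  have hIcival : ∫ x in Ici (1:ℝ), f x ∂μ = ∫ x in Ici (1:ℝ), f x * φ x := by
    rw [show ∫ x in Ici (1:ℝ), f x ∂μ = ∫ x, f x ∂(μ.restrict (Ici 1)) from rfl, hrestr]
    rw [show (fun x => ENNReal.ofReal (φ x)) = (fun x => ((φ x).toNNReal : ENNReal)) from rfl]
    rw [integral_withDensity_eq_integral_smul
      (Measurable.real_toNNReal hφm) f]
    refine setIntegral_congr_fun measurableSet_Ici fun x _ => ?_
    simp only [NNReal.smul_def, smul_eq_mul, Real.coe_toNNReal _ (hφ0 x)]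
    ring
  -- bounds over Ici 1
  have hupper : ∫ x in Ici (1:ℝ), f x * φ x ≤ c * a * (Real.log M + 1 / p) + b * (1 / (2 - p)) := by
    calc ∫ x in Ici (1:ℝ), f x * φ x
        ≤ ∫ x in Ici (1:ℝ), (c * a * g1 x + b * g3 x) := by
          refine setIntegral_mono_on hfφint
            ((hg1int.const_mul (c*a)).add (hg3int.const_mul b)) measurableSet_Ici ?_
          intro x hx
          have h1 := hφub x hx
          have h0 := hf0 x (by linarith [mem_Ici.mp hx])
          calc f x * φ x ≤ f x * (c * a * x ^ (-(p+1)) + b * x ^ (-(3:ℝ))) :=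
                mul_le_mul_of_nonneg_left h1 h0
            _ = c * a * g1 x + b * g3 x := by rw [hg1def, hg3def]; ring
      _ = c * a * (∫ x in Ici (1:ℝ), g1 x) + b * ∫ x in Ici (1:ℝ), g3 x := by
          rw [integral_add (hg1int.const_mul (c*a)) (hg3int.const_mul b),
            integral_const_mul, integral_const_mul]
      _ ≤ c * a * (Real.log M + 1 / p) + b * (1 / (2 - p)) := by
          rw [hg1val]
          have := mul_le_mul_of_nonneg_left hIg3 hb.le
          linarith
  have hlower : a * Real.log M - b * (1 / (2 - p)) ≤ ∫ x in Ici (1:ℝ), f x * φ x := by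
    have hle : ∫ x in Ici (1:ℝ), (a * g1 x - b * g3 x) ≤ ∫ x in Ici (1:ℝ), f x * φ x := by
      refine setIntegral_mono_on
        ((hg1int.const_mul a).sub (hg3int.const_mul b)) hfφint measurableSet_Ici ?_
      intro x hx
      have hx1 : (1:ℝ) ≤ x := mem_Ici.mp hx
      have h0 := hf0 x (by linarith)
      have hlb' : a * x ^ (-(p+1)) - b * x ^ (-(3:ℝ)) ≤ φ x := by
        have := hlb x hx1
        rwa [hdiv1 a x hx1, hdiv3 b x hx1] at this
      calc a * g1 x - b * g3 x = f x * (a * x ^ (-(p+1)) - b * x ^ (-(3:ℝ))) := by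
            rw [hg1def, hg3def]; ring
        _ ≤ f x * φ x := mul_le_mul_of_nonneg_left hlb' h0
    have heq : ∫ x in Ici (1:ℝ), (a * g1 x - b * g3 x)
        = a * (Real.log M + 1 / p) - b * ∫ x in Ici (1:ℝ), g3 x := by
      rw [integral_sub (hg1int.const_mul a) (hg3int.const_mul b),
        integral_const_mul, integral_const_mul, hg1val]
    have h3 := mul_le_mul_of_nonneg_left hIg3 hb.le
    have hap : 0 ≤ a * (1 / p) := by positivity
    linarith
  -- the part below 1
  have hae0 : ∀ᵐ x ∂μ, (0:ℝ) ≤ x := by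
    rw [ae_iff]
    convert hsupp using 2
    ext x; simp [not_le]
  have haefle : ∀ᵐ x ∂(μ.restrict (Iio 1)), f x ≤ 1 ∧ 0 ≤ f x := by
    filter_upwards [ae_restrict_mem measurableSet_Iio, ae_restrict_of_ae hae0] with x hx hx0
    have hmin : min x M = x := min_eq_left (by linarith [mem_Iio.mp hx])
    constructor
    · rw [hfdef]; simp only [hmin]
      exact Real.rpow_le_one hx0 (le_of_lt (mem_Iio.mp hx)) hp0.le
    · exact hf0 x hx0
  have hIioint : IntegrableOn f (Iio (1:ℝ)) μ := by
    refine Integrable.mono' (integrable_const 1) hfmeas.aestronglyMeasurable ?_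
    filter_upwards [haefle] with x hx
    rw [Real.norm_eq_abs, abs_of_nonneg hx.2]
    exact hx.1
  have hIio0 : 0 ≤ ∫ x in Iio (1:ℝ), f x ∂μ :=
    integral_nonneg_of_ae (haefle.mono fun x hx => hx.2)
  have hIio1 : ∫ x in Iio (1:ℝ), f x ∂μ ≤ 1 := by
    calc ∫ x in Iio (1:ℝ), f x ∂μ ≤ ∫ _ in Iio (1:ℝ), (1:ℝ) ∂μ :=
          integral_mono_ae hIioint (integrable_const 1) (haefle.mono fun x hx => hx.1)
      _ = (μ (Iio 1)).toReal := by simp; rfl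
      _ ≤ 1 := by
          rw [show (1:ℝ) = (1:ENNReal).toReal by simp]
          exact ENNReal.toReal_mono ENNReal.one_ne_top prob_le_one
  -- combine
  have hfint : Integrable f μ := by
    rw [← integrableOn_univ, ← Set.Iio_union_Ici (a := (1:ℝ))]
    exact hIioint.union hIciint
  have hsplit : ∫ x, f x ∂μ = (∫ x in Iio (1:ℝ), f x ∂μ) + ∫ x in Ici (1:ℝ), f x ∂μ := by
    rw [← Set.compl_Iio (a := (1:ℝ))]
    exact (integral_add_compl measurableSet_Iio hfint).symm
  refine ⟨?_, ?_⟩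
  · have hca : 0 ≤ c * a * (1 / p) := by positivity
    rw [show (∫ x, (min x M) ^ p ∂μ) = ∫ x, f x ∂μ from rfl, hsplit, hIcival]
    linarith
  · rw [show (∫ x, (min x M) ^ p ∂μ) = ∫ x, f x ∂μ from rfl, hsplit, hIcival]
    have := hupper
    linarith
end
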